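/- arXiv:2605.13917 — 7 statements merged into one kernel-verified Lean document; each statement's English description precedes it below -/
import Mathlib

section
/- Let G = (V, E⁺, E⁰) be a fuzzy graph with weight function ω, let k be a nonnegative integer, and let K be a clique in G⁽⁺⁾ with |K| ≥ k + 2. If 𝒞 is a clustering of G of cost at most k, then all vertices of N^∩_{G⁽⁺⁾}[K] := ⋂_{x ∈ K} (N⁺(x) ∪ {x}) lie in the same cluster of 𝒞. -/
open Finset

/-- A fuzzy graph: a finite vertex set with disjoint symmetric irreflexive sets of
'real' edges and 'fuzzy' edges; remaining pairs of distinct vertices are 'nonedges'. -/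
structure FuzzyGraph (V : Type*) where
  real : V → V → Bool
  fuzzy : V → V → Bool
  real_symm : ∀ u v, real u v = real v u
  fuzzy_symm : ∀ u v, fuzzy u v = fuzzy v u
  real_irrefl : ∀ v, real v v = false
  fuzzy_irrefl : ∀ v, fuzzy v v = false
  not_real_and_fuzzy : ∀ u v, ¬(real u v = true ∧ fuzzy u v = true)

namespace FuzzyGraph

variable {V : Type*}

/-- The pair `{u,v}` is a nonedge: distinct, neither a real nor a fuzzy edge. -/
def nonedge (G : FuzzyGraph V) (u v : V) : Prop :=
  u ≠ v ∧ ¬G.real u v ∧ ¬G.fuzzy u v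

instance (G : FuzzyGraph V) [DecidableEq V] (u v : V) : Decidable (G.nonedge u v) :=
  inferInstanceAs (Decidable (u ≠ v ∧ ¬G.real u v ∧ ¬G.fuzzy u v))

/-- The simple graph `G⁽⁺⁾` of real edges. -/
def plus (G : FuzzyGraph V) : SimpleGraph V where
  Adj u v := G.real u v
  symm := ⟨by intro u v h; rwa [G.real_symm] at h⟩
  loopless := ⟨by intro v h; rw [G.real_irrefl] at h; exact Bool.noConfusion h⟩

/-- The simple graph `G⁽⁰⁾` of fuzzy edges. -/
def zero (G : FuzzyGraph V) : SimpleGraph V where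
  Adj u v := G.fuzzy u v
  symm := ⟨by intro u v h; rwa [G.fuzzy_symm] at h⟩
  loopless := ⟨by intro v h; rw [G.fuzzy_irrefl] at h; exact Bool.noConfusion h⟩

variable [Fintype V] [DecidableEq V]

/-- The real neighborhood `N⁺(v)`. -/
def realNbrs (G : FuzzyGraph V) (v : V) : Finset V := univ.filter fun u => G.real v u

/-- The fuzzy neighborhood `N⁰(v)`. -/
def fuzzyNbrs (G : FuzzyGraph V) (v : V) : Finset V := univ.filter fun u => G.fuzzy v u

/-- The nonneighborhood `N⁻(v)`. -/
def nonNbrs (G : FuzzyGraph V) (v : V) : Finset V := univ.filter fun u => G.nonedge v u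

/-- The closed real neighborhood `N⁺[v]`. -/
def closedRealNbrs (G : FuzzyGraph V) (v : V) : Finset V := insert v (G.realNbrs v)

end FuzzyGraph

/-- `ω` is a valid weight function for `G`: symmetric nonnegative integer weights,
zero exactly on the fuzzy edges. -/
def IsWeight {V : Type*} [Fintype V] [DecidableEq V] (G : FuzzyGraph V) (ω : V → V → ℕ) : Prop :=
  (∀ u v, ω u v = ω v u) ∧ ∀ u v : V, u ≠ v → (ω u v = 0 ↔ G.fuzzy u v)

/-- The unit weight function: weight 1 on real edges and nonedges, 0 on fuzzy edges. -/
def unitW {V : Type*} (G : FuzzyGraph V) : V → V → ℕ := fun u v => if G.fuzzy u v then 0 else 1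

/-- Two vertices lie in a common cluster of the clustering `𝒞`. -/
def together {V : Type*} [Fintype V] [DecidableEq V] (𝒞 : Finpartition (univ : Finset V))
    (u v : V) : Prop :=
  ∃ C ∈ 𝒞.parts, u ∈ C ∧ v ∈ C

instance {V : Type*} [Fintype V] [DecidableEq V] (𝒞 : Finpartition (univ : Finset V)) (u v : V) :
    Decidable (together 𝒞 u v) :=
  inferInstanceAs (Decidable (∃ C ∈ 𝒞.parts, u ∈ C ∧ v ∈ C))

/-- The cost of a clustering: total weight of real edges between different clusters
plus total weight of nonedges inside clusters.  (Each unordered pair is counted twice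
in the sum over ordered pairs, whence the division by 2.) -/
def cost {V : Type*} [Fintype V] [DecidableEq V] (G : FuzzyGraph V) (ω : V → V → ℕ)
    (𝒞 : Finpartition (univ : Finset V)) : ℕ :=
  (∑ p ∈ univ.offDiag,
      ((if G.real p.1 p.2 ∧ ¬together 𝒞 p.1 p.2 then ω p.1 p.2 else 0) +
       (if G.nonedge p.1 p.2 ∧ together 𝒞 p.1 p.2 then ω p.1 p.2 else 0))) / 2

/-- A clique in `G⁽⁺⁾`: pairwise real-adjacent vertices. -/
def IsRealClique {V : Type*} (G : FuzzyGraph V) (K : Finset V) : Prop :=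
  ∀ u ∈ K, ∀ v ∈ K, u ≠ v → G.real u v

/-- A clique in `G⁽⁰⁾`: pairwise fuzzy-adjacent vertices. -/
def IsFuzzyClique {V : Type*} (G : FuzzyGraph V) (K : Finset V) : Prop :=
  ∀ u ∈ K, ∀ v ∈ K, u ≠ v → G.fuzzy u v

/-- A critical clique of `G⁽⁺⁾`: a clique with `⋂_{x ∈ K} N⁺[x] = ⋃_{x ∈ K} N⁺[x]`,
inclusion-wise maximal with this property. -/
def IsCriticalClique {V : Type*} [Fintype V] [DecidableEq V] (G : FuzzyGraph V)
    (K : Finset V) : Prop :=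
  IsRealClique G K ∧ K.inf (G.closedRealNbrs) = K.sup (G.closedRealNbrs) ∧
    ∀ K' : Finset V, K ⊆ K' → IsRealClique G K' →
      K'.inf (G.closedRealNbrs) = K'.sup (G.closedRealNbrs) → K' = K

/-- A simple graph is `c`-closed if every pair of distinct nonadjacent vertices has
fewer than `c` common neighbors. -/
def IsCClosed {V : Type*} (H : SimpleGraph V) (c : ℕ) : Prop :=
  ∀ u v : V, u ≠ v → ¬H.Adj u v → Set.ncard {w | H.Adj u w ∧ H.Adj v w} < c

/-- A fuzzy graph is fuzzy `c`-closed if its fuzzy edge graph `G⁽⁰⁾` is `c`-closed. -/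
def FuzzyCClosed {V : Type*} [Fintype V] [DecidableEq V] (G : FuzzyGraph V) (c : ℕ) : Prop :=
  ∀ u v : V, u ≠ v → ¬G.fuzzy u v → ((G.fuzzyNbrs u) ∩ (G.fuzzyNbrs v)).card < c

/-- If `K` is a real clique with `|K| ≥ k + 2` and `𝒞` a clustering of cost
at most `k`, then all vertices of `⋂_{x ∈ K} N⁺[x]` lie in the same cluster of `𝒞`. -/


theorem stmt1 {V : Type*} [Fintype V] [DecidableEq V]
    (G : FuzzyGraph V) (ω : V → V → ℕ) (hω : IsWeight G ω) (k : ℕ)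
    (K : Finset V) (hK : IsRealClique G K) (hsize : k + 2 ≤ K.card)
    (𝒞 : Finpartition (Finset.univ : Finset V)) (hcost : cost G ω 𝒞 ≤ k)
    (w₁ w₂ : V) (h₁ : ∀ x ∈ K, w₁ ∈ G.closedRealNbrs x) (h₂ : ∀ x ∈ K, w₂ ∈ G.closedRealNbrs x) :
    together 𝒞 w₁ w₂ := by
  classical
  by_contra hsep
  have hself : ∀ v : V, together 𝒞 v v := fun v => by
    obtain ⟨C, hC, hvC⟩ := 𝒞.exists_mem (mem_univ v)
    exact ⟨C, hC, hvC, hvC⟩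
  have hsymm : ∀ a b : V, together 𝒞 a b → together 𝒞 b a := by
    rintro a b ⟨C, hC, ha, hb⟩; exact ⟨C, hC, hb, ha⟩
  have hne : w₁ ≠ w₂ := by rintro rfl; exact hsep (hself w₁)
  have htrans : ∀ x, together 𝒞 x w₁ → together 𝒞 x w₂ → False := by
    rintro x ⟨C, hC, hxC, h1C⟩ ⟨D, hD, hxD, h2D⟩
    have hCD : C = D := 𝒞.eq_of_mem_parts hC hD hxC hxD
    exact hsep ⟨D, hD, hCD ▸ h1C, h2D⟩
  set f : V → V := fun x => if together 𝒞 x w₁ then w₂ else w₁ with hfdef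
  have hfmem : ∀ x, f x = w₁ ∨ f x = w₂ := by
    intro x; by_cases h : together 𝒞 x w₁ <;> simp [hfdef, h]
  have hxne : ∀ x, x ≠ f x := by
    intro x hx
    by_cases h : together 𝒞 x w₁
    · have h2 : f x = w₂ := by simp [hfdef, h]
      rw [h2] at hx; subst hx; exact hsep (hsymm _ _ h)
    · have h2 : f x = w₁ := by simp [hfdef, h]
      rw [h2] at hx; subst hx; exact h (hself _)
  have hnotog : ∀ x, ¬ together 𝒞 x (f x) := by
    intro x hx
    by_cases h : together 𝒞 x w₁
    · have h2 : f x = w₂ := by simp [hfdef, h]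
      rw [h2] at hx; exact htrans x h hx
    · have h2 : f x = w₁ := by simp [hfdef, h]
      rw [h2] at hx; exact h hx
  have hreal : ∀ x ∈ K, G.real x (f x) := by
    intro x hx
    rcases hfmem x with h | h <;> rw [h]
    · have hm := h₁ x hx
      rw [FuzzyGraph.closedRealNbrs, mem_insert] at hm
      rcases hm with h' | h'
      · exact absurd (h ▸ h'.symm) (hxne x)
      · rw [FuzzyGraph.realNbrs, mem_filter] at h'; exact h'.2
    · have hm := h₂ x hx
      rw [FuzzyGraph.closedRealNbrs, mem_insert] at hm
      rcases hm with h' | h'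
      · exact absurd (h ▸ h'.symm) (hxne x)
      · rw [FuzzyGraph.realNbrs, mem_filter] at h'; exact h'.2
  have hω1 : ∀ x ∈ K, 1 ≤ ω x (f x) := by
    intro x hx
    rcases Nat.eq_zero_or_pos (ω x (f x)) with h | h
    · have hf := (hω.2 x (f x) (hxne x)).1 h
      exact absurd ⟨hreal x hx, hf⟩ (G.not_real_and_fuzzy x (f x))
    · exact h
  set S₁ : Finset (V × V) := K.image (fun x => (x, f x)) with hS1
  set S₂ : Finset (V × V) := K.image (fun x => (f x, x)) with hS2
  have hc1 : S₁.card = K.card := by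
    rw [hS1, card_image_of_injOn]
    intro a _ b _ hab
    exact congrArg Prod.fst hab
  have hc2 : S₂.card = K.card := by
    rw [hS2, card_image_of_injOn]
    intro a _ b _ hab
    exact congrArg Prod.snd hab
  have hinter : (S₁ ∩ S₂).card ≤ 2 := by
    have hsub : S₁ ∩ S₂ ⊆ ({w₁, w₂} : Finset V).image (fun z => (z, f z)) := by
      intro p hp
      rw [mem_inter] at hp
      obtain ⟨x, _, hx⟩ := mem_image.1 hp.1
      obtain ⟨y, _, hy⟩ := mem_image.1 hp.2
      have hp1 : p.1 = f y := by rw [← hy]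
      have hp2 : p.2 = f p.1 := by rw [← hx]
      rw [mem_image]
      refine ⟨p.1, ?_, Prod.ext rfl hp2.symm⟩
      rw [hp1, mem_insert, mem_singleton]
      exact hfmem y
    calc (S₁ ∩ S₂).card ≤ _ := card_le_card hsub
      _ ≤ ({w₁, w₂} : Finset V).card := card_image_le
      _ ≤ 2 := (card_insert_le _ _).trans (by simp)
  have hScard : 2 * (k + 1) ≤ (S₁ ∪ S₂).card := by
    have h := card_union_add_card_inter S₁ S₂
    omega
  have hsubOff : S₁ ∪ S₂ ⊆ univ.offDiag := by
    intro p hp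
    rw [mem_offDiag]
    refine ⟨mem_univ _, mem_univ _, ?_⟩
    rcases mem_union.1 hp with h | h <;> obtain ⟨x, _, hx⟩ := mem_image.1 h <;> rw [← hx]
    · exact hxne x
    · exact fun he => hxne x he.symm
  have hterm : ∀ p ∈ S₁ ∪ S₂,
      1 ≤ (if G.real p.1 p.2 ∧ ¬together 𝒞 p.1 p.2 then ω p.1 p.2 else 0) +
          (if G.nonedge p.1 p.2 ∧ together 𝒞 p.1 p.2 then ω p.1 p.2 else 0) := by
    intro p hp
    rcases mem_union.1 hp with h | h <;> obtain ⟨x, hxK, hx⟩ := mem_image.1 h <;> rw [← hx]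
    · simp only
      rw [if_pos ⟨hreal x hxK, hnotog x⟩]
      exact le_add_right (hω1 x hxK)
    · simp only
      have hr : G.real (f x) x := by rw [G.real_symm]; exact hreal x hxK
      have hnt : ¬ together 𝒞 (f x) x := fun ht => hnotog x (hsymm _ _ ht)
      rw [if_pos ⟨hr, hnt⟩, hω.1 (f x) x]
      exact le_add_right (hω1 x hxK)
  have hsum : 2 * (k + 1) ≤ ∑ p ∈ univ.offDiag,
      ((if G.real p.1 p.2 ∧ ¬together 𝒞 p.1 p.2 then ω p.1 p.2 else 0) +
       (if G.nonedge p.1 p.2 ∧ together 𝒞 p.1 p.2 then ω p.1 p.2 else 0)) := by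
    calc 2 * (k + 1) ≤ (S₁ ∪ S₂).card := hScard
      _ = ∑ _p ∈ S₁ ∪ S₂, 1 := by simp
      _ ≤ ∑ p ∈ S₁ ∪ S₂, _ := sum_le_sum hterm
      _ ≤ _ := sum_le_sum_of_subset hsubOff
  have hge : k + 1 ≤ cost G ω 𝒞 := by
    rw [cost]
    have h2 := Nat.div_le_div_right (c := 2) hsum
    rwa [Nat.mul_div_cancel_left _ (by norm_num : 0 < 2)] at h2
  omega
end

section
/- Let G = (V, E⁺, E⁰) be a fuzzy graph with weight function ω. For every clustering 𝒞 of G there exists a clustering 𝒞' of G with cost(𝒞') ≤ cost(𝒞) such that every cluster of 𝒞' induces a connected subgraph of G⁽⁺⁾. In particular, there is an optimal clustering in which every cluster is connected in G⁽⁺⁾. -/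
open Finset

lemma aux_reach {V : Type*} {H K : SimpleGraph V} (hle : ∀ a b, H.Adj a b → K.Adj a b)
    {C : Set V} (hcl : ∀ a b, a ∈ C → H.Adj a b → b ∈ C) :
    ∀ {u v : V} (_ : H.Walk u v) (hu : u ∈ C),
      ∃ hv : v ∈ C, (K.induce C).Reachable ⟨u, hu⟩ ⟨v, hv⟩ := by
  intro u v p
  induction p with
  | nil => intro hu; exact ⟨hu, by rfl⟩
  | @cons a b c h p ih =>
    intro hu
    have hb : b ∈ C := hcl _ _ hu h
    obtain ⟨hv, hr⟩ := ih hb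
    refine ⟨hv, (SimpleGraph.Adj.reachable ?_).trans hr⟩
    exact hle a b h

lemma together_of_reach {V : Type*} [Fintype V] [DecidableEq V]
    (𝒞 : Finpartition (univ : Finset V)) {H : SimpleGraph V}
    (hH : ∀ a b, H.Adj a b → together 𝒞 a b) {u v : V} (h : H.Reachable u v) :
    together 𝒞 u v := by
  obtain ⟨p⟩ := h
  induction p with
  | nil =>
    obtain ⟨C, hC, hu⟩ := 𝒞.exists_mem (mem_univ _)
    exact ⟨C, hC, hu, hu⟩
  | @cons a b c h p ih =>
    obtain ⟨C, hC, ha, hb⟩ := hH a b h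
    obtain ⟨D, hD, hb', hc⟩ := ih
    rw [𝒞.eq_of_mem_parts hC hD hb hb'] at ha
    exact ⟨D, hD, ha, hc⟩

/-- For every clustering there is one of no larger cost whose clusters all
induce connected subgraphs of `G⁽⁺⁾`; in particular there is an optimal clustering all of
whose clusters are connected in `G⁽⁺⁾`. -/
theorem stmt3 {V : Type*} [Fintype V] [DecidableEq V]
    (G : FuzzyGraph V) (ω : V → V → ℕ) (hω : IsWeight G ω) :
    (∀ 𝒞 : Finpartition (Finset.univ : Finset V),
      ∃ 𝒞' : Finpartition (Finset.univ : Finset V), cost G ω 𝒞' ≤ cost G ω 𝒞 ∧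
        ∀ C ∈ 𝒞'.parts, (SimpleGraph.induce (↑C : Set V) G.plus).Connected) ∧
    (∃ 𝒞' : Finpartition (Finset.univ : Finset V),
      (∀ 𝒟 : Finpartition (Finset.univ : Finset V), cost G ω 𝒞' ≤ cost G ω 𝒟) ∧
        ∀ C ∈ 𝒞'.parts, (SimpleGraph.induce (↑C : Set V) G.plus).Connected) := by
  
  classical
  have main : ∀ 𝒞 : Finpartition (Finset.univ : Finset V),
      ∃ 𝒞' : Finpartition (Finset.univ : Finset V), cost G ω 𝒞' ≤ cost G ω 𝒞 ∧
        ∀ C ∈ 𝒞'.parts, (SimpleGraph.induce (↑C : Set V) G.plus).Connected := by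
    intro 𝒞
    set H : SimpleGraph V :=
      { Adj := fun u v => G.plus.Adj u v ∧ together 𝒞 u v
        symm := ⟨by
          rintro u v ⟨h1, C, hC, hu, hv⟩
          exact ⟨h1.symm, C, hC, hv, hu⟩⟩
        loopless := ⟨by rintro v ⟨h1, _⟩; exact G.plus.loopless.irrefl v h1⟩ } with hHdef
    haveI : DecidableRel H.Adj := fun u v =>
      inferInstanceAs (Decidable (G.plus.Adj u v ∧ together 𝒞 u v))
    set s : Setoid V := H.reachableSetoid with hsdef
    haveI : DecidableRel s.r := inferInstanceAs (DecidableRel H.Reachable)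
    set 𝒞' := Finpartition.ofSetoid s with h𝒞'
    have hadj : ∀ a b, H.Adj a b → together 𝒞 a b := fun a b h => h.2
    have key : ∀ u v : V, together 𝒞' u v ↔ H.Reachable u v := by
      intro u v
      constructor
      · rintro ⟨C, hC, hu, hv⟩
        rw [← 𝒞'.part_eq_of_mem hC hu] at hv
        exact Finpartition.mem_part_ofSetoid_iff_rel.mp hv
      · intro h
        refine ⟨𝒞'.part u, 𝒞'.part_mem.mpr (mem_univ u), 𝒞'.mem_part (mem_univ u), ?_⟩
        exact Finpartition.mem_part_ofSetoid_iff_rel.mpr h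
    refine ⟨𝒞', ?_, ?_⟩
    · unfold cost
      apply Nat.div_le_div_right
      apply Finset.sum_le_sum
      intro p _
      gcongr
      · split_ifs with h1 h2
        · rfl
        · exfalso
          apply h2
          refine ⟨h1.1, fun ht => h1.2 ?_⟩
          exact (key _ _).mpr (SimpleGraph.Adj.reachable ⟨h1.1, ht⟩)
        · exact Nat.zero_le _
        · rfl
      · split_ifs with h1 h2
        · rfl
        · exfalso
          exact h2 ⟨h1.1, together_of_reach 𝒞 hadj ((key _ _).mp h1.2)⟩
        · exact Nat.zero_le _
        · rfl
    · intro C hC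
      obtain ⟨a, ha⟩ := 𝒞'.nonempty_of_mem_parts hC
      have hmem : ∀ b : V, b ∈ C ↔ H.Reachable a b := by
        intro b
        rw [← 𝒞'.part_eq_of_mem hC ha]
        exact Finpartition.mem_part_ofSetoid_iff_rel
      have hcl : ∀ x y : V, x ∈ (↑C : Set V) → H.Adj x y → y ∈ (↑C : Set V) := by
        intro x y hx hxy
        simp only [Finset.mem_coe, hmem] at hx ⊢
        exact hx.trans (SimpleGraph.Adj.reachable hxy)
      rw [SimpleGraph.connected_iff]
      refine ⟨?_, ⟨⟨a, ha⟩⟩⟩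
      · intro u v
        have hu : H.Reachable a (u : V) := (hmem _).mp u.2
        have hv : H.Reachable a (v : V) := (hmem _).mp v.2
        obtain ⟨p⟩ := hu.symm.trans hv
        obtain ⟨hv', hr⟩ := aux_reach (H := H) (K := G.plus) (fun x y h => h.1) hcl p u.2
        exact hr
  refine ⟨main, ?_⟩
  have hne : (Set.range (cost G ω)).Nonempty := ⟨_, ⟨Finpartition.ofSetoid ⊥, rfl⟩⟩
  obtain ⟨𝒟, h𝒟⟩ := Nat.sInf_mem hne
  obtain ⟨𝒞', hle, hconn⟩ := main 𝒟
  refine ⟨𝒞', fun 𝒟' => ?_, hconn⟩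
  exact hle.trans (h𝒟 ▸ Nat.sInf_le ⟨𝒟', rfl⟩)
end

section
/- A fuzzy graph G = (V, E⁺, E⁰) with weight function ω admits a clustering of cost 0 if and only if for every connected component C of G⁽⁺⁾ and every pair of distinct vertices u, v ∈ C, the pair {u,v} is a real edge or a fuzzy edge of G. -/
open Finset

section helpers
variable {V : Type*} [Fintype V] [DecidableEq V] (G : FuzzyGraph V)

instance : DecidableRel G.plus.Adj := fun u v => inferInstanceAs (Decidable (G.real u v = true))

lemma together_refl (𝒞 : Finpartition (Finset.univ : Finset V)) (u : V) : together 𝒞 u u := by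
  obtain ⟨C, hC, hu⟩ := 𝒞.exists_mem (Finset.mem_univ u)
  exact ⟨C, hC, hu, hu⟩

lemma together_symm (𝒞 : Finpartition (Finset.univ : Finset V)) {u v : V}
    (h : together 𝒞 u v) : together 𝒞 v u := by
  obtain ⟨C, hC, hu, hv⟩ := h; exact ⟨C, hC, hv, hu⟩

lemma together_trans (𝒞 : Finpartition (Finset.univ : Finset V)) {u v w : V}
    (h : together 𝒞 u v) (h' : together 𝒞 v w) : together 𝒞 u w := by
  obtain ⟨C, hC, hu, hv⟩ := h
  obtain ⟨C', hC', hv', hw⟩ := h'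
  exact ⟨C, hC, hu, (𝒞.eq_of_mem_parts hC hC' hv hv') ▸ hw⟩

end helpers

/-- `G` admits a clustering of cost 0 iff any two distinct vertices in a
common connected component of `G⁽⁺⁾` form a real edge or a fuzzy edge. -/
theorem stmt4 {V : Type*} [Fintype V] [DecidableEq V]
    (G : FuzzyGraph V) (ω : V → V → ℕ) (hω : IsWeight G ω) :
    (∃ 𝒞 : Finpartition (Finset.univ : Finset V), cost G ω 𝒞 = 0) ↔
    (∀ u v : V, u ≠ v → G.plus.Reachable u v → (G.real u v ∨ G.fuzzy u v)) := by
  have hωpos : ∀ a b : V, a ≠ b → ¬G.fuzzy a b → 1 ≤ ω a b := fun a b hab hf => by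
    rcases Nat.eq_zero_or_pos (ω a b) with h0 | h1
    · exact absurd ((hω.2 a b hab).1 h0) hf
    · exact h1
  constructor
  · rintro ⟨𝒞, hc⟩ u v huv hreach
    set f : V × V → ℕ := fun p =>
      ((if G.real p.1 p.2 ∧ ¬together 𝒞 p.1 p.2 then ω p.1 p.2 else 0) +
       (if G.nonedge p.1 p.2 ∧ together 𝒞 p.1 p.2 then ω p.1 p.2 else 0)) with hf
    have hc' : (∑ p ∈ Finset.univ.offDiag, f p) / 2 = 0 := hc
    have hS : ∑ p ∈ Finset.univ.offDiag, f p ≤ 1 := by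
      have := Nat.div_eq_zero_iff.1 hc'
      omega
    have key : ∀ a b : V, a ≠ b → 1 ≤ f (a, b) → False := by
      intro a b hab hfab
      have hfba : 1 ≤ f (b, a) := by
        have htiff : together 𝒞 b a ↔ together 𝒞 a b := ⟨together_symm 𝒞, together_symm 𝒞⟩
        have hneq : (b ≠ a) ↔ (a ≠ b) := ne_comm
        have hsymm : f (b, a) = f (a, b) := by
          simp only [hf, FuzzyGraph.nonedge, G.real_symm b a, G.fuzzy_symm b a, hω.1 b a,
            htiff, hneq]
          congr
        omega
      have hsub : {(a, b), (b, a)} ⊆ Finset.univ.offDiag := by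
        intro p hp; simp at hp
        rcases hp with rfl | rfl <;> simp [Finset.mem_offDiag, hab, hab.symm]
      have h2 : 2 ≤ ∑ p ∈ Finset.univ.offDiag, f p := by
        calc 2 ≤ ∑ p ∈ ({(a, b), (b, a)} : Finset (V × V)), f p := by
              rw [Finset.sum_pair (by simp [hab])]; omega
          _ ≤ _ := Finset.sum_le_sum_of_subset hsub
      omega
    have hreal : ∀ a b : V, G.real a b → together 𝒞 a b := by
      intro a b hr
      by_contra ht
      have hab : a ≠ b := fun h => by subst h; simp [G.real_irrefl] at hr
      have hfz : ¬ G.fuzzy a b := fun hfz => G.not_real_and_fuzzy a b ⟨hr, hfz⟩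
      exact key a b hab (by simp [hf, hr, ht]; exact hωpos a b hab hfz)
    have hwalk : ∀ {a b : V}, G.plus.Walk a b → together 𝒞 a b := by
      intro a b w
      induction w with
      | nil => exact together_refl 𝒞 _
      | cons h p ih => exact together_trans 𝒞 (hreal _ _ h) ih
    have hnon : ¬ G.nonedge u v := by
      intro hn
      have ht : together 𝒞 u v := hreach.elim fun w => hwalk w
      exact key u v huv (by simp [hf, hn, ht]; exact hωpos u v huv hn.2.2)
    by_cases hr : G.real u v
    · exact Or.inl hr
    by_cases hfz : G.fuzzy u v
    · exact Or.inr hfz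
    exact absurd ⟨huv, hr, hfz⟩ hnon
  · intro h
    haveI : DecidableRel G.plus.reachableSetoid.r :=
      fun a b => inferInstanceAs (Decidable (G.plus.Reachable a b))
    set 𝒞 := Finpartition.ofSetoid G.plus.reachableSetoid with h𝒞
    refine ⟨𝒞, ?_⟩
    have htog : ∀ a b : V, together 𝒞 a b ↔ G.plus.Reachable a b := by
      intro a b
      constructor
      · rintro ⟨C, hC, ha, hb⟩
        have hCeq : C = 𝒞.part a :=
          𝒞.eq_of_mem_parts hC (𝒞.part_mem.2 (Finset.mem_univ a)) ha
            (𝒞.mem_part (Finset.mem_univ a))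
        rw [hCeq] at hb
        exact (Finpartition.mem_part_ofSetoid_iff_rel (s := G.plus.reachableSetoid)).1 hb
      · intro hr
        exact ⟨𝒞.part a, 𝒞.part_mem.2 (Finset.mem_univ a), 𝒞.mem_part (Finset.mem_univ a),
          (Finpartition.mem_part_ofSetoid_iff_rel (s := G.plus.reachableSetoid)).2 hr⟩
    rw [cost, Finset.sum_eq_zero]
    · rfl
    intro p hp
    rw [Finset.mem_offDiag] at hp
    obtain ⟨-, -, hne⟩ := hp
    rw [if_neg, if_neg, add_zero]
    · rintro ⟨hn, ht⟩
      rcases h p.1 p.2 hne ((htog _ _).1 ht) with hr | hfz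
      · exact hn.2.1 hr
      · exact hn.2.2 hfz
    · rintro ⟨hr, ht⟩
      exact ht ((htog _ _).2 (SimpleGraph.Adj.reachable hr))
end

section
/- Let G = (V, E⁺, E⁰) be a fuzzy graph that is fuzzy c-closed for an integer c ≥ 1, and let k be a nonnegative integer. If v is a vertex with |N⁺(v)| > 2kc and |N⁰(v)| ≥ c, then v has a fuzzy neighbor u with |N⁺(v) ∩ N⁺(u)| > k or |N⁺(v) ∩ N⁻(u)| > k. -/
open Finset

/-- In a fuzzy `c`-closed graph (`c ≥ 1`), a vertex with more than `2kc` real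
neighbors and at least `c` fuzzy neighbors has a fuzzy neighbor `u` with
`|N⁺(v) ∩ N⁺(u)| > k` or `|N⁺(v) ∩ N⁻(u)| > k`. -/
theorem stmt9 {V : Type*} [Fintype V] [DecidableEq V]
    (G : FuzzyGraph V) (c k : ℕ) (hc : 1 ≤ c) (hcl : FuzzyCClosed G c)
    (v : V) (h1 : 2 * k * c < (G.realNbrs v).card) (h2 : c ≤ (G.fuzzyNbrs v).card) :
    ∃ u : V, G.fuzzy v u ∧
      (k < ((G.realNbrs v) ∩ (G.realNbrs u)).card ∨
       k < ((G.realNbrs v) ∩ (G.nonNbrs u)).card) := by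
  by_contra hcon
  push_neg at hcon
  set R := G.realNbrs v with hR
  set F := G.fuzzyNbrs v with hF
  obtain ⟨F', hF'sub, hF'card⟩ := Finset.exists_subset_card_eq h2
  -- each fuzzy neighbor u is fuzzy-adjacent to at least R.card - 2k members of R
  have key1 : ∀ u ∈ F', R.card ≤ (R.filter fun w => G.fuzzy u w).card + 2 * k := by
    intro u hu
    have huF : u ∈ F := hF'sub hu
    have hfu : G.fuzzy v u := by simpa [hF, FuzzyGraph.fuzzyNbrs] using huF
    obtain ⟨h1', h2'⟩ := hcon u hfu
    have hsub : R ⊆ (R.filter fun w => G.fuzzy u w) ∪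
        ((R ∩ G.realNbrs u) ∪ (R ∩ G.nonNbrs u)) := by
      intro w hw
      have hwv : G.real v w := by simpa [hR, FuzzyGraph.realNbrs] using hw
      by_cases hf : G.fuzzy u w
      · exact mem_union_left _ (mem_filter.mpr ⟨hw, hf⟩)
      by_cases hr : G.real u w
      · exact mem_union_right _ (mem_union_left _ (mem_inter.mpr ⟨hw, by
          simp [FuzzyGraph.realNbrs, hr]⟩))
      · have hne : u ≠ w := by
          rintro rfl
          exact G.not_real_and_fuzzy v u ⟨hwv, hfu⟩
        exact mem_union_right _ (mem_union_right _ (mem_inter.mpr ⟨hw, by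
          simp [FuzzyGraph.nonNbrs, FuzzyGraph.nonedge, hne, hr, hf]⟩))
    have hc1 : R.card ≤ (R.filter fun w => G.fuzzy u w).card +
        ((R ∩ G.realNbrs u).card + (R ∩ G.nonNbrs u).card) := by
      refine le_trans (card_le_card hsub) ?_
      refine le_trans (card_union_le _ _) ?_
      gcongr
      exact card_union_le _ _
    omega
  -- each w in R has fewer than c fuzzy neighbors among F'
  have key2 : ∀ w ∈ R, (F'.filter fun u => G.fuzzy u w).card + 1 ≤ c := by
    intro w hw
    have hwv : G.real v w := by simpa [hR, FuzzyGraph.realNbrs] using hw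
    have hvw : v ≠ w := by
      rintro rfl
      have := G.real_irrefl v
      rw [this] at hwv
      exact Bool.noConfusion hwv
    have hnf : ¬ G.fuzzy v w := fun hf => G.not_real_and_fuzzy v w ⟨hwv, hf⟩
    have hsub : (F'.filter fun u => G.fuzzy u w) ⊆ G.fuzzyNbrs v ∩ G.fuzzyNbrs w := by
      intro u hu
      obtain ⟨hu1, hu2⟩ := mem_filter.mp hu
      refine mem_inter.mpr ⟨hF'sub hu1, ?_⟩
      simp only [FuzzyGraph.fuzzyNbrs, mem_filter, mem_univ, true_and]
      rw [G.fuzzy_symm]; exact hu2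
    have := hcl v w hvw hnf
    have := card_le_card hsub
    omega
  -- double counting
  have hdc : (∑ u ∈ F', (R.filter fun w => G.fuzzy u w).card)
      = ∑ w ∈ R, (F'.filter fun u => G.fuzzy u w).card := by
    simp only [card_filter]
    exact Finset.sum_comm
  have hlow : c * R.card ≤ (∑ u ∈ F', (R.filter fun w => G.fuzzy u w).card) + c * (2 * k) := by
    calc c * R.card = ∑ _u ∈ F', R.card := by rw [Finset.sum_const, hF'card, smul_eq_mul]
      _ ≤ ∑ u ∈ F', ((R.filter fun w => G.fuzzy u w).card + 2 * k) :=
          Finset.sum_le_sum key1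
      _ = (∑ u ∈ F', (R.filter fun w => G.fuzzy u w).card) + c * (2 * k) := by
          rw [Finset.sum_add_distrib, Finset.sum_const, hF'card, smul_eq_mul]
  have hhigh : (∑ w ∈ R, (F'.filter fun u => G.fuzzy u w).card) + R.card ≤ R.card * c := by
    calc (∑ w ∈ R, (F'.filter fun u => G.fuzzy u w).card) + R.card
        = ∑ w ∈ R, ((F'.filter fun u => G.fuzzy u w).card + 1) := by
          rw [Finset.sum_add_distrib, Finset.sum_const, smul_eq_mul, mul_one]
      _ ≤ ∑ _w ∈ R, c := Finset.sum_le_sum key2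
      _ = R.card * c := by rw [Finset.sum_const, smul_eq_mul]
  rw [hdc] at hlow
  have e1 : c * R.card = R.card * c := Nat.mul_comm _ _
  have e2 : c * (2 * k) = 2 * k * c := Nat.mul_comm _ _
  omega
end

section
/- Let G = (V, E⁺, E⁰) be a fuzzy graph with weight function ω that is fuzzy c-closed, and let k ≥ 1, c ≥ 1 be integers. Assume: (i) every vertex of V has fewer than c fuzzy neighbors or at most 2kc real neighbors; (ii) there is no pair of distinct vertices u, v with {u,v} ∈ E⁻ and |N⁺(u) ∩ N⁺(v)| > k; (iii) there is no fuzzy edge {u,v} ∈ E⁰ with |N⁰(u) ∩ N⁰(v)| < c and |N⁺(u) ∩ N⁺(v)| > k. Let V₊ be the set of vertices with fewer than c fuzzy neighbors and V₀ = V \ V₊. If 𝒞 is a clustering of G of cost at most k and C ∈ 𝒞 is a cluster with |C| > 4kc + k + c + 2, then C ∩ V₀ is a clique in G⁽⁰⁾ (pairwise fuzzy edges) and C ∩ V₊ is a clique in G⁽⁺⁾ (pairwise real edges). -/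
open Finset

/-- Under the stated reducedness conditions on a fuzzy `c`-closed graph, in
any cluster `C` of size more than `4kc + k + c + 2` of a clustering of cost at most `k`,
`C ∩ V₀` is a fuzzy clique and `C ∩ V₊` is a real clique, where `V₊` is the set of vertices
with fewer than `c` fuzzy neighbors and `V₀ = V \ V₊`. -/
theorem stmt10 {V : Type*} [Fintype V] [DecidableEq V]
    (G : FuzzyGraph V) (ω : V → V → ℕ) (hω : IsWeight G ω) (c k : ℕ) (hk : 1 ≤ k) (hc : 1 ≤ c)
    (hcl : FuzzyCClosed G c)
    (h1 : ∀ v : V, (G.fuzzyNbrs v).card < c ∨ (G.realNbrs v).card ≤ 2 * k * c)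
    (h2 : ∀ u v : V, G.nonedge u v → ((G.realNbrs u) ∩ (G.realNbrs v)).card ≤ k)
    (h3 : ∀ u v : V, G.fuzzy u v → ((G.fuzzyNbrs u) ∩ (G.fuzzyNbrs v)).card < c →
      ((G.realNbrs u) ∩ (G.realNbrs v)).card ≤ k)
    (𝒞 : Finpartition (Finset.univ : Finset V)) (hcost : cost G ω 𝒞 ≤ k)
    (C : Finset V) (hC : C ∈ 𝒞.parts) (hbig : 4 * k * c + k + c + 2 < C.card) :
    IsFuzzyClique G (C.filter fun v => ¬(G.fuzzyNbrs v).card < c) ∧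
    IsRealClique G (C.filter fun v => (G.fuzzyNbrs v).card < c) := by
  classical
  obtain ⟨hωs, hωz⟩ := hω
  have hnsymm : ∀ u v : V, G.nonedge u v → G.nonedge v u := by
    rintro u v ⟨hne, hr, hf⟩
    exact ⟨hne.symm, by rwa [G.real_symm], by rwa [G.fuzzy_symm]⟩
  have htri : ∀ a b : V, a ≠ b → G.real a b ∨ G.fuzzy a b ∨ G.nonedge a b := by
    intro a b hab
    by_cases hr : G.real a b
    · exact Or.inl hr
    by_cases hf : G.fuzzy a b
    · exact Or.inr (Or.inl hf)
    · exact Or.inr (Or.inr ⟨hab, hr, hf⟩)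
  set N : Finset (V × V) := (C ×ˢ C).filter (fun p => G.nonedge p.1 p.2) with hNdef
  have hNcard : N.card ≤ 2 * k + 1 := by
    have hsub : N ⊆ Finset.univ.offDiag := by
      intro p hp
      simp only [hNdef, Finset.mem_filter, Finset.mem_product] at hp
      simp [Finset.mem_offDiag, hp.2.1]
    have hone : ∀ p ∈ N,
        1 ≤ (if G.real p.1 p.2 ∧ ¬together 𝒞 p.1 p.2 then ω p.1 p.2 else 0) +
            (if G.nonedge p.1 p.2 ∧ together 𝒞 p.1 p.2 then ω p.1 p.2 else 0) := by
      intro p hp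
      simp only [hNdef, Finset.mem_filter, Finset.mem_product] at hp
      have htog : together 𝒞 p.1 p.2 := ⟨C, hC, hp.1.1, hp.1.2⟩
      have hω1 : ω p.1 p.2 ≠ 0 := fun h0 => hp.2.2.2 ((hωz p.1 p.2 hp.2.1).mp h0)
      have h2nd : (if G.nonedge p.1 p.2 ∧ together 𝒞 p.1 p.2 then ω p.1 p.2 else 0) =
          ω p.1 p.2 := if_pos ⟨hp.2, htog⟩
      omega
    have hsum : N.card ≤ ∑ p ∈ Finset.univ.offDiag,
        ((if G.real p.1 p.2 ∧ ¬together 𝒞 p.1 p.2 then ω p.1 p.2 else 0) +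
         (if G.nonedge p.1 p.2 ∧ together 𝒞 p.1 p.2 then ω p.1 p.2 else 0)) := by
      calc N.card = ∑ _p ∈ N, 1 := by simp
        _ ≤ ∑ p ∈ N,
            ((if G.real p.1 p.2 ∧ ¬together 𝒞 p.1 p.2 then ω p.1 p.2 else 0) +
             (if G.nonedge p.1 p.2 ∧ together 𝒞 p.1 p.2 then ω p.1 p.2 else 0)) :=
            Finset.sum_le_sum hone
        _ ≤ _ := Finset.sum_le_sum_of_subset hsub
    unfold cost at hcost
    omega
  have key : ∀ u ∈ C, ∀ v ∈ C, u ≠ v →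
      (C.filter (fun w => G.nonedge u w)).card +
      (C.filter (fun w => G.nonedge v w)).card ≤ k + 1 := by
    intro u hu v hv huv
    set Du := C.filter (fun w => G.nonedge u w) with hDu
    set Dv := C.filter (fun w => G.nonedge v w) with hDv
    set X := ({u} ×ˢ Du) ∪ (Dv ×ˢ {v}) with hX
    set Y := (Du ×ˢ {u}) ∪ ({v} ×ˢ Dv) with hY
    have hXN : X ⊆ N := by
      rintro ⟨a, b⟩ hp
      simp only [hX, Finset.mem_union, Finset.mem_product, Finset.mem_singleton,
        hDu, hDv, Finset.mem_filter] at hp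
      simp only [hNdef, Finset.mem_filter, Finset.mem_product]
      rcases hp with ⟨rfl, hbC, hne⟩ | ⟨⟨haC, hne⟩, rfl⟩
      · exact ⟨⟨hu, hbC⟩, hne⟩
      · exact ⟨⟨haC, hv⟩, hnsymm _ _ hne⟩
    have hYN : Y ⊆ N := by
      rintro ⟨a, b⟩ hp
      simp only [hY, Finset.mem_union, Finset.mem_product, Finset.mem_singleton,
        hDu, hDv, Finset.mem_filter] at hp
      simp only [hNdef, Finset.mem_filter, Finset.mem_product]
      rcases hp with ⟨⟨haC, hne⟩, rfl⟩ | ⟨rfl, hbC, hne⟩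
      · exact ⟨⟨haC, hu⟩, hnsymm _ _ hne⟩
      · exact ⟨⟨hv, hbC⟩, hne⟩
    have hdisj : Disjoint X Y := by
      rw [Finset.disjoint_left]
      rintro ⟨a, b⟩ hpx hpy
      simp only [hX, hY, Finset.mem_union, Finset.mem_product, Finset.mem_singleton,
        hDu, hDv, Finset.mem_filter] at hpx hpy
      rcases hpx with ⟨rfl, _, hne⟩ | ⟨⟨_, hne⟩, rfl⟩ <;>
        rcases hpy with ⟨⟨_, hne'⟩, h2⟩ | ⟨h2, _, hne'⟩
      · exact hne'.1 (h2 ▸ rfl)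
      · exact huv h2
      · exact huv h2.symm
      · exact hne'.1 (h2 ▸ rfl)
    have hXi : ({u} ×ˢ Du) ∩ (Dv ×ˢ {v}) ⊆ {(u, v)} := by
      rintro ⟨a, b⟩ hp
      simp only [Finset.mem_inter, Finset.mem_product, Finset.mem_singleton] at hp ⊢
      exact Prod.ext hp.1.1 hp.2.2
    have hYi : (Du ×ˢ {u}) ∩ ({v} ×ˢ Dv) ⊆ {(v, u)} := by
      rintro ⟨a, b⟩ hp
      simp only [Finset.mem_inter, Finset.mem_product, Finset.mem_singleton] at hp ⊢
      exact Prod.ext hp.2.1 hp.1.2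
    have hX1 := Finset.card_union_add_card_inter ({u} ×ˢ Du) (Dv ×ˢ {v})
    have hY1 := Finset.card_union_add_card_inter (Du ×ˢ {u}) ({v} ×ˢ Dv)
    have hX2 := Finset.card_le_card hXi
    have hY2 := Finset.card_le_card hYi
    have hXY : X.card + Y.card ≤ N.card := by
      rw [← Finset.card_union_of_disjoint hdisj]
      exact Finset.card_le_card (Finset.union_subset hXN hYN)
    rw [← hX] at hX1
    rw [← hY] at hY1
    simp only [Finset.card_product, Finset.card_singleton, one_mul, mul_one] at hX1 hY1 hX2 hY2
    omega
  have hkc : k ≤ k * c := Nat.le_mul_of_pos_right k hc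
  have hck : c ≤ k * c := Nat.le_mul_of_pos_left c hk
  constructor
  · intro u hu v hv huv
    rw [Finset.mem_filter] at hu hv
    by_contra hfuv
    have hru : (G.realNbrs u).card ≤ 2 * k * c := (h1 u).resolve_left hu.2
    have hrv : (G.realNbrs v).card ≤ 2 * k * c := (h1 v).resolve_left hv.2
    have hcc : ((G.fuzzyNbrs u) ∩ (G.fuzzyNbrs v)).card < c := hcl u v huv hfuv
    set Du := C.filter (fun w => G.nonedge u w) with hDu
    set Dv := C.filter (fun w => G.nonedge v w) with hDv
    have hsub : C ⊆ {u} ∪ G.realNbrs u ∪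
        ((G.fuzzyNbrs u ∩ G.fuzzyNbrs v) ∪ G.realNbrs v ∪ Dv) ∪ Du := by
      intro w hw
      simp only [Finset.mem_union, Finset.mem_singleton, Finset.mem_inter,
        FuzzyGraph.realNbrs, FuzzyGraph.fuzzyNbrs, Finset.mem_filter, Finset.mem_univ,
        true_and]
      by_cases hwu : w = u
      · tauto
      rcases htri u w (Ne.symm hwu) with hr | hf | hn
      · tauto
      · have hwv : w ≠ v := by rintro rfl; exact hfuv hf
        rcases htri v w (Ne.symm hwv) with hr' | hf' | hn'
        · tauto
        · tauto
        · have : w ∈ Dv := Finset.mem_filter.mpr ⟨hw, hn'⟩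
          tauto
      · have : w ∈ Du := Finset.mem_filter.mpr ⟨hw, hn⟩
        tauto
    have hle : C.card ≤ ({u} ∪ G.realNbrs u).card +
        ((G.fuzzyNbrs u ∩ G.fuzzyNbrs v) ∪ G.realNbrs v ∪ Dv).card + Du.card :=
      le_trans (Finset.card_le_card hsub)
        (le_trans (Finset.card_union_le _ _)
          (add_le_add (Finset.card_union_le _ _) le_rfl))
    have e1 : ({u} ∪ G.realNbrs u).card ≤ 1 + (G.realNbrs u).card :=
      le_trans (Finset.card_union_le _ _) (by simp)
    have e2 : ((G.fuzzyNbrs u ∩ G.fuzzyNbrs v) ∪ G.realNbrs v ∪ Dv).card ≤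
        (G.fuzzyNbrs u ∩ G.fuzzyNbrs v).card + (G.realNbrs v).card + Dv.card :=
      le_trans (Finset.card_union_le _ _)
        (add_le_add (Finset.card_union_le _ _) le_rfl)
    have hkey := key u hu.1 v hv.1 huv
    rw [← hDu, ← hDv] at hkey
    linarith
  · intro u hu v hv huv
    rw [Finset.mem_filter] at hu hv
    by_contra hruv
    have hcommon : ((G.realNbrs u) ∩ (G.realNbrs v)).card ≤ k := by
      rcases htri u v huv with hr | hf | hn
      · exact absurd hr hruv
      · exact h3 u v hf (lt_of_le_of_lt (Finset.card_le_card Finset.inter_subset_left) hu.2)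
      · exact h2 u v hn
    set Du := C.filter (fun w => G.nonedge u w) with hDu
    set Dv := C.filter (fun w => G.nonedge v w) with hDv
    have hsub : C ⊆ {u} ∪ G.fuzzyNbrs u ∪
        ((G.realNbrs u ∩ G.realNbrs v) ∪ G.fuzzyNbrs v ∪ Dv) ∪ Du := by
      intro w hw
      simp only [Finset.mem_union, Finset.mem_singleton, Finset.mem_inter,
        FuzzyGraph.realNbrs, FuzzyGraph.fuzzyNbrs, Finset.mem_filter, Finset.mem_univ,
        true_and]
      by_cases hwu : w = u
      · tauto
      rcases htri u w (Ne.symm hwu) with hr | hf | hn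
      · have hwv : w ≠ v := by rintro rfl; exact hruv hr
        rcases htri v w (Ne.symm hwv) with hr' | hf' | hn'
        · tauto
        · tauto
        · have : w ∈ Dv := Finset.mem_filter.mpr ⟨hw, hn'⟩
          tauto
      · tauto
      · have : w ∈ Du := Finset.mem_filter.mpr ⟨hw, hn⟩
        tauto
    have hle : C.card ≤ ({u} ∪ G.fuzzyNbrs u).card +
        ((G.realNbrs u ∩ G.realNbrs v) ∪ G.fuzzyNbrs v ∪ Dv).card + Du.card :=
      le_trans (Finset.card_le_card hsub)
        (le_trans (Finset.card_union_le _ _)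
          (add_le_add (Finset.card_union_le _ _) le_rfl))
    have e1 : ({u} ∪ G.fuzzyNbrs u).card ≤ 1 + (G.fuzzyNbrs u).card :=
      le_trans (Finset.card_union_le _ _) (by simp)
    have e2 : ((G.realNbrs u ∩ G.realNbrs v) ∪ G.fuzzyNbrs v ∪ Dv).card ≤
        ((G.realNbrs u ∩ G.realNbrs v)).card + (G.fuzzyNbrs v).card + Dv.card :=
      le_trans (Finset.card_union_le _ _)
        (add_le_add (Finset.card_union_le _ _) le_rfl)
    have hkey := key u hu.1 v hv.1 huv
    rw [← hDu, ← hDv] at hkey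
    have hfu := hu.2
    have hfv := hv.2
    linarith
end

section
/- Let G = (V, E⁺, E⁰) be a fuzzy graph with weight function ω and let k be a nonnegative integer. Assume that every connected component of G⁽⁺⁾ contains two vertices that form a nonedge of G. Then every clustering of G of cost at most k has at most 2k clusters. -/
open Finset

/-- If every connected component of `G⁽⁺⁾` contains a nonedge, then every
clustering of cost at most `k` has at most `2k` clusters. -/
theorem stmt13 {V : Type*} [Fintype V] [DecidableEq V]
    (G : FuzzyGraph V) (ω : V → V → ℕ) (hω : IsWeight G ω) (k : ℕ)
    (hcomp : ∀ w : V, ∃ u v : V, G.plus.Reachable w u ∧ G.plus.Reachable w v ∧ G.nonedge u v)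
    (𝒞 : Finpartition (Finset.univ : Finset V)) (hcost : cost G ω 𝒞 ≤ k) :
    𝒞.parts.card ≤ 2 * k := by
  classical
  set f : V × V → ℕ := fun p =>
    (if G.real p.1 p.2 ∧ ¬together 𝒞 p.1 p.2 then ω p.1 p.2 else 0) +
    (if G.nonedge p.1 p.2 ∧ together 𝒞 p.1 p.2 then ω p.1 p.2 else 0) with hf
  have hcost' : (∑ p ∈ univ.offDiag, f p) / 2 ≤ k := hcost
  -- positivity of ω on non-fuzzy distinct pairs
  have hωpos : ∀ u v : V, u ≠ v → ¬G.fuzzy u v → 1 ≤ ω u v := by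
    intro u v huv hfz
    rcases Nat.eq_zero_or_pos (ω u v) with h0 | h
    · exact absurd ((hω.2 u v huv).1 h0) hfz
    · exact h
  have htogs : ∀ u v : V, together 𝒞 u v ↔ together 𝒞 v u := by
    intro u v
    constructor <;> rintro ⟨C, hC, h1, h2⟩ <;> exact ⟨C, hC, h2, h1⟩
  -- witness pair for each cluster
  have hwit : ∀ C ∈ 𝒞.parts, ∃ p : V × V, p ∈ univ.offDiag ∧ p.1 ∈ C ∧ 1 ≤ f p := by
    intro C hC
    obtain ⟨w, hw⟩ := 𝒞.nonempty_of_mem_parts hC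
    obtain ⟨u, v, hwu, hwv, hne⟩ := hcomp w
    have bdry : ∀ x : V, G.plus.Reachable w x → x ∉ C →
        ∃ p : V × V, p ∈ univ.offDiag ∧ p.1 ∈ C ∧ 1 ≤ f p := by
      intro x hr hx
      obtain ⟨pwalk⟩ := hr
      obtain ⟨d, _, hd1, hd2⟩ := pwalk.exists_boundary_dart (↑C : Set V)
        (Finset.mem_coe.mpr hw) (fun h => hx (Finset.mem_coe.mp h))
      have hadj : G.plus.Adj d.fst d.snd := d.adj
      have hne' : d.fst ≠ d.snd := hadj.ne
      have hnt : ¬ together 𝒞 d.fst d.snd := by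
        rintro ⟨D, hD, h1, h2⟩
        exact hd2 (Finset.mem_coe.mpr (by rwa [𝒞.eq_of_mem_parts hD hC h1 (Finset.mem_coe.mp hd1)] at h2))
      have hreal : G.real d.fst d.snd := hadj
      have hfz : ¬G.fuzzy d.fst d.snd := fun h => G.not_real_and_fuzzy _ _ ⟨hreal, h⟩
      refine ⟨(d.fst, d.snd), by simp [Finset.mem_offDiag, hne'], Finset.mem_coe.mp hd1, ?_⟩
      have h1 : (1 : ℕ) ≤ (if G.real d.fst d.snd ∧ ¬together 𝒞 d.fst d.snd
          then ω d.fst d.snd else 0) := by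
        rw [if_pos ⟨hreal, hnt⟩]; exact hωpos _ _ hne' hfz
      simp only [hf]
      exact le_add_right h1
    by_cases hu : u ∈ C
    · by_cases hv : v ∈ C
      · refine ⟨(u, v), by simp [Finset.mem_offDiag, hne.1], hu, ?_⟩
        have htog : together 𝒞 u v := ⟨C, hC, hu, hv⟩
        have h2 : (1 : ℕ) ≤ (if G.nonedge u v ∧ together 𝒞 u v then ω u v else 0) := by
          rw [if_pos ⟨hne, htog⟩]; exact hωpos _ _ hne.1 hne.2.2
        simp only [hf]
        exact le_add_left h2
      · exact bdry v hwv hv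
    · exact bdry u hwu hu
  -- parts.card ≤ S
  choose pick hpick1 hpick2 hpick3 using hwit
  have hcardS : 𝒞.parts.card ≤ ∑ p ∈ univ.offDiag, f p := by
    set P : Finset (V × V) := 𝒞.parts.attach.image (fun C => pick C.1 C.2) with hP
    have hinj : ∀ C ∈ 𝒞.parts.attach, ∀ D ∈ 𝒞.parts.attach,
        pick C.1 C.2 = pick D.1 D.2 → C = D := by
      intro C _ D _ h
      have h1 : (pick C.1 C.2).1 ∈ C.1 := hpick2 C.1 C.2
      have h2 : (pick C.1 C.2).1 ∈ D.1 := h ▸ hpick2 D.1 D.2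
      exact Subtype.ext (𝒞.eq_of_mem_parts C.2 D.2 h1 h2)
    have hcard : P.card = 𝒞.parts.card := by
      rw [hP, Finset.card_image_of_injOn hinj, Finset.card_attach]
    have hPsub : P ⊆ univ.offDiag := by
      intro p hp
      rw [hP, Finset.mem_image] at hp
      obtain ⟨C, _, rfl⟩ := hp
      exact hpick1 C.1 C.2
    calc 𝒞.parts.card = ∑ _p ∈ P, 1 := by rw [Finset.sum_const, smul_eq_mul, mul_one, hcard]
      _ ≤ ∑ p ∈ P, f p := by
          refine Finset.sum_le_sum ?_
          intro p hp
          rw [hP, Finset.mem_image] at hp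
          obtain ⟨C, _, rfl⟩ := hp
          exact hpick3 C.1 C.2
      _ ≤ ∑ p ∈ univ.offDiag, f p := Finset.sum_le_sum_of_subset hPsub
  -- S is even
  have hsymm : ∀ p : V × V, f p.swap = f p := by
    rintro ⟨a, b⟩
    simp only [hf, Prod.swap_prod_mk]
    have hr : G.real b a = G.real a b := G.real_symm b a
    have hnei : G.nonedge b a ↔ G.nonedge a b := by
      unfold FuzzyGraph.nonedge
      rw [G.real_symm b a, G.fuzzy_symm b a]
      constructor <;> rintro ⟨h1, h2⟩ <;> exact ⟨h1.symm, h2⟩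
    rw [hω.1 b a]
    congr 1
    · apply if_congr _ rfl rfl
      rw [hr, htogs b a]
    · apply if_congr _ rfl rfl
      rw [hnei, htogs b a]
  have heven : 2 ∣ ∑ p ∈ univ.offDiag, f p := by
    set e := Fintype.equivFin V with he
    have hsplit : (univ.offDiag : Finset (V × V)) =
        (univ.offDiag.filter fun p => e p.1 < e p.2) ∪
        (univ.offDiag.filter fun p => e p.2 < e p.1) := by
      ext p
      simp only [Finset.mem_union, Finset.mem_filter, Finset.mem_offDiag, Finset.mem_univ,
        true_and]
      constructor
      · intro hne
        rcases lt_trichotomy (e p.1) (e p.2) with h | h | h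
        · exact Or.inl ⟨hne, h⟩
        · exact absurd (e.injective h) hne
        · exact Or.inr ⟨hne, h⟩
      · rintro (⟨h, _⟩ | ⟨h, _⟩) <;> exact h
    have hdisj : Disjoint (univ.offDiag.filter fun p : V × V => e p.1 < e p.2)
        (univ.offDiag.filter fun p : V × V => e p.2 < e p.1) := by
      rw [Finset.disjoint_left]
      intro p hp hq
      rw [Finset.mem_filter] at hp hq
      omega
    have hswap : ∑ p ∈ (univ.offDiag.filter fun p : V × V => e p.2 < e p.1), f p =
        ∑ p ∈ (univ.offDiag.filter fun p : V × V => e p.1 < e p.2), f p := by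
      refine Finset.sum_nbij' (fun p => p.swap) (fun p => p.swap) ?_ ?_ ?_ ?_ ?_
      · intro p hp
        rw [Finset.mem_filter, Finset.mem_offDiag] at hp ⊢
        exact ⟨⟨Finset.mem_univ _, Finset.mem_univ _, Ne.symm hp.1.2.2⟩, hp.2⟩
      · intro p hp
        rw [Finset.mem_filter, Finset.mem_offDiag] at hp ⊢
        exact ⟨⟨Finset.mem_univ _, Finset.mem_univ _, Ne.symm hp.1.2.2⟩, hp.2⟩
      · intro p _; exact Prod.swap_swap p
      · intro p _; exact Prod.swap_swap p
      · intro p _; exact (hsymm p).symm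
    rw [hsplit, Finset.sum_union hdisj, hswap]
    exact ⟨_, (two_mul _).symm⟩
  obtain ⟨t, ht⟩ := heven
  rw [ht] at hcardS hcost'
  rw [Nat.mul_div_cancel_left t (by norm_num)] at hcost'
  omega
end

section
/- Let H = (V, E) be a finite simple graph on n vertices and let k ≤ n be a nonnegative integer. Define a fuzzy graph G' with unit weights on real edges and nonedges as follows: the vertex set is V together with one new vertex v*; the real edges of G' are exactly the pairs {u, v*} for u ∈ V; the fuzzy edges of G' are exactly the edges of H; the nonedges of G' are exactly the pairs of distinct vertices of V that are non-adjacent in H. Then H contains a clique of size at least k if and only if G' admits a clustering of cost at most n − k. -/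
open Finset

section Helpers

open Finset

lemma sum_split_option {V : Type*} [Fintype V] [DecidableEq V] (f : Option V → Option V → ℕ)
    (hdiag : ∀ a, f a a = 0) :
    ∑ p ∈ (univ : Finset (Option V)).offDiag, f p.1 p.2 =
      ∑ v, f none (some v) + ∑ u, (f (some u) none + ∑ v, f (some u) (some v)) := by
  have hsub : (univ : Finset (Option V)).offDiag ⊆ univ ×ˢ univ := by
    intro p hp; simp [Finset.mem_product]
  rw [Finset.sum_subset hsub]
  · rw [Finset.sum_product]
    simp only [univ_option, Finset.sum_insertNone]
    rw [hdiag, zero_add]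
  · intro p _ hp
    have h : p.1 = p.2 := by
      by_contra h
      exact hp (Finset.mem_offDiag.2 ⟨mem_univ _, mem_univ _, h⟩)
    rw [h, hdiag]

lemma together_iff_mem_part {α : Type*} [Fintype α] [DecidableEq α]
    (𝒞 : Finpartition (univ : Finset α)) (a b : α) :
    together 𝒞 a b ↔ b ∈ 𝒞.part a := by
  constructor
  · rintro ⟨C, hC, haC, hbC⟩
    rwa [𝒞.part_eq_of_mem hC haC]
  · intro hb
    exact ⟨𝒞.part a, 𝒞.part_mem.2 (mem_univ a), 𝒞.mem_part (mem_univ a), hb⟩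

lemma together_trans' {α : Type*} [Fintype α] [DecidableEq α]
    (𝒞 : Finpartition (univ : Finset α)) {a b c : α} :
    together 𝒞 a b → together 𝒞 a c → together 𝒞 b c := by
  rintro ⟨C, hC, haC, hbC⟩ ⟨C', hC', haC', hcC'⟩
  have h : C = C' := 𝒞.eq_of_mem_parts hC hC' haC haC'
  exact ⟨C, hC, hbC, h ▸ hcC'⟩

lemma together_symm' {α : Type*} [Fintype α] [DecidableEq α]
    (𝒞 : Finpartition (univ : Finset α)) {a b : α} :
    together 𝒞 a b → together 𝒞 b a := by
  rintro ⟨C, hC, haC, hbC⟩; exact ⟨C, hC, hbC, haC⟩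

lemma clique_extract {V : Type*} [DecidableEq V] (H : SimpleGraph V) [DecidableRel H.Adj]
    (S : Finset V) :
    ∃ T ⊆ S, (∀ u ∈ T, ∀ v ∈ T, u ≠ v → H.Adj u v) ∧
      2 * S.card ≤ 2 * T.card + (S.offDiag.filter fun p => ¬H.Adj p.1 p.2).card := by
  induction S using Finset.strongInduction with
  | _ S ih =>
    by_cases hE : ∀ u ∈ S, ∀ v ∈ S, u ≠ v → H.Adj u v
    · exact ⟨S, Finset.Subset.refl _, hE, Nat.le_add_right _ _⟩
    · push_neg at hE
      obtain ⟨u, hu, v, hv, huv, hadj⟩ := hE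
      obtain ⟨T, hTS, hT, hTcard⟩ := ih (S.erase u) (Finset.erase_ssubset hu)
      refine ⟨T, hTS.trans (Finset.erase_subset _ _), hT, ?_⟩
      have hAsub : insert (u, v) (insert (v, u) ((S.erase u).offDiag.filter
          fun p => ¬H.Adj p.1 p.2)) ⊆ S.offDiag.filter fun p => ¬H.Adj p.1 p.2 := by
        intro p hp
        simp only [Finset.mem_insert] at hp
        rcases hp with rfl | rfl | hp
        · exact Finset.mem_filter.2 ⟨Finset.mem_offDiag.2 ⟨hu, hv, huv⟩, hadj⟩
        · exact Finset.mem_filter.2 ⟨Finset.mem_offDiag.2 ⟨hv, hu, huv.symm⟩,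
            fun h => hadj (H.adj_symm h)⟩
        · obtain ⟨hpo, hpa⟩ := Finset.mem_filter.1 hp
          obtain ⟨h1, h2, h3⟩ := Finset.mem_offDiag.1 hpo
          exact Finset.mem_filter.2 ⟨Finset.mem_offDiag.2
            ⟨Finset.mem_of_mem_erase h1, Finset.mem_of_mem_erase h2, h3⟩, hpa⟩
      have hc2 : ((S.erase u).offDiag.filter fun p => ¬H.Adj p.1 p.2).card + 2 ≤
          (S.offDiag.filter fun p => ¬H.Adj p.1 p.2).card := by
        have hvu : (v, u) ∉ ((S.erase u).offDiag.filter fun p => ¬H.Adj p.1 p.2) := by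
          intro h
          have h2 := (Finset.mem_offDiag.1 (Finset.mem_filter.1 h).1).2.1
          exact (Finset.mem_erase.1 h2).1 rfl
        have huv' : (u, v) ∉ insert (v, u) ((S.erase u).offDiag.filter
            fun p => ¬H.Adj p.1 p.2) := by
          intro h
          rcases Finset.mem_insert.1 h with h | h
          · exact huv (congrArg Prod.fst h)
          · have h2 := (Finset.mem_offDiag.1 (Finset.mem_filter.1 h).1).1
            exact (Finset.mem_erase.1 h2).1 rfl
        calc _ = (insert (u, v) (insert (v, u) ((S.erase u).offDiag.filter
              fun p => ¬H.Adj p.1 p.2))).card := by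
              rw [Finset.card_insert_of_notMem huv', Finset.card_insert_of_notMem hvu]
        _ ≤ _ := Finset.card_le_card hAsub
      have h3 := Finset.card_erase_of_mem hu
      have hS : 1 ≤ S.card := Finset.card_pos.2 ⟨u, hu⟩
      omega

lemma sum_if_notmem {V : Type*} [Fintype V] [DecidableEq V] (S : Finset V) :
    ∑ v, (if v ∈ S then (0:ℕ) else 1) = Fintype.card V - S.card := by
  have h : ∀ v ∈ (univ : Finset V), (if v ∈ S then (0:ℕ) else 1) = if v ∈ Sᶜ then 1 else 0 := by
    intro v _; by_cases hv : v ∈ S <;> simp [hv]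
  rw [Finset.sum_congr rfl h, Finset.sum_ite_mem, Finset.univ_inter, Finset.sum_const,
    smul_eq_mul, mul_one, Finset.card_compl]

lemma sum_ind {V : Type*} [Fintype V] [DecidableEq V] (H : SimpleGraph V) [DecidableRel H.Adj]
    (S : Finset V) :
    ∑ u, ∑ v, (if u ∈ S ∧ v ∈ S ∧ u ≠ v ∧ ¬H.Adj u v then (1:ℕ) else 0) =
      (S.offDiag.filter fun p => ¬H.Adj p.1 p.2).card := by
  rw [← Finset.sum_product']
  have h : (Finset.univ ×ˢ Finset.univ).filter
      (fun p : V × V => p.1 ∈ S ∧ p.2 ∈ S ∧ p.1 ≠ p.2 ∧ ¬H.Adj p.1 p.2) =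
      S.offDiag.filter fun p => ¬H.Adj p.1 p.2 := by
    ext ⟨u, v⟩
    simp only [Finset.mem_filter, Finset.mem_product, Finset.mem_univ, true_and,
      Finset.mem_offDiag]
    tauto
  rw [Finset.sum_boole, h]
  simp

end Helpers


section MainHelpers

open Finset

/-- The summand of `cost` at unit weights. -/
def ctTerm {V : Type*} [Fintype V] [DecidableEq V] (G : FuzzyGraph V)
    (𝒞 : Finpartition (univ : Finset V)) (a b : V) : ℕ :=
  (if G.real a b ∧ ¬together 𝒞 a b then unitW G a b else 0) +
  (if G.nonedge a b ∧ together 𝒞 a b then unitW G a b else 0)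

lemma cost_eq_sum_ctTerm {V : Type*} [Fintype V] [DecidableEq V] (G : FuzzyGraph V)
    (𝒞 : Finpartition (univ : Finset V)) :
    cost G (unitW G) 𝒞 = (∑ p ∈ univ.offDiag, ctTerm G 𝒞 p.1 p.2) / 2 := rfl

lemma ctTerm_diag {V : Type*} [Fintype V] [DecidableEq V] (G : FuzzyGraph V)
    (𝒞 : Finpartition (univ : Finset V)) (a : V) : ctTerm G 𝒞 a a = 0 := by
  have h1 : ¬(G.real a a ∧ ¬together 𝒞 a a) := by
    rintro ⟨hr, -⟩; rw [G.real_irrefl] at hr; exact Bool.noConfusion hr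
  have h2 : ¬(G.nonedge a a ∧ together 𝒞 a a) := by
    rintro ⟨⟨hne, -, -⟩, -⟩; exact hne rfl
  simp only [ctTerm, if_neg h1, if_neg h2, add_zero]

end MainHelpers

/-- Reduction from Clique to Correlation Clustering: `H` has a clique of size
at least `k` iff the fuzzy graph `G'` on `V ∪ {v*}` — whose real edges join `v*` to all of
`V`, whose fuzzy edges are the edges of `H`, and whose nonedges are the non-adjacent pairs
of `H` — admits a clustering of cost at most `n − k`. -/
theorem stmt17 {V : Type*} [Fintype V] [DecidableEq V]
    (H : SimpleGraph V) [DecidableRel H.Adj] (k : ℕ) (hk : k ≤ Fintype.card V)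
    (G' : FuzzyGraph (Option V))
    (hreal : ∀ a b : Option V,
      G'.real a b ↔ ((a = none ∧ b ≠ none) ∨ (b = none ∧ a ≠ none)))
    (hfuzzy : ∀ u v : V, G'.fuzzy (some u) (some v) ↔ H.Adj u v) :
    (∃ S : Finset V, k ≤ S.card ∧ ∀ u ∈ S, ∀ v ∈ S, u ≠ v → H.Adj u v) ↔
    (∃ 𝒞 : Finpartition (Finset.univ : Finset (Option V)),
      cost G' (unitW G') 𝒞 ≤ Fintype.card V - k) := by
  classical
  have hrealns : ∀ v : V, G'.real none (some v) := fun v =>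
    (hreal _ _).2 (Or.inl ⟨rfl, fun h => Option.some_ne_none _ h⟩)
  have hrealsn : ∀ u : V, G'.real (some u) none := fun u =>
    (hreal _ _).2 (Or.inr ⟨rfl, fun h => Option.some_ne_none _ h⟩)
  have hrealss : ∀ u v : V, ¬ G'.real (some u) (some v) := fun u v h => by
    rcases (hreal _ _).1 h with ⟨h1, -⟩ | ⟨h1, -⟩ <;> exact Option.some_ne_none _ h1
  have hfns : ∀ v : V, ¬ G'.fuzzy none (some v) := fun v h =>
    G'.not_real_and_fuzzy _ _ ⟨hrealns v, h⟩
  have hfsn : ∀ u : V, ¬ G'.fuzzy (some u) none := fun u h =>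
    G'.not_real_and_fuzzy _ _ ⟨hrealsn u, h⟩
  constructor
  · rintro ⟨S0, hS0k, hS0⟩
    obtain ⟨S, hSsub, hScard⟩ := Finset.exists_subset_card_eq hS0k
    have hSclique : ∀ u ∈ S, ∀ v ∈ S, u ≠ v → H.Adj u v :=
      fun u hu v hv => hS0 u (hSsub hu) v (hSsub hv)
    set C0 : Finset (Option V) := insert none (S.image some) with hC0
    have requiv : Equivalence (fun a b : Option V => a = b ∨ (a ∈ C0 ∧ b ∈ C0)) := by
      refine ⟨fun a => Or.inl rfl, ?_, ?_⟩
      · rintro a b (rfl | ⟨h1, h2⟩)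
        · exact Or.inl rfl
        · exact Or.inr ⟨h2, h1⟩
      · rintro a b c (rfl | ⟨h1, h2⟩) hbc
        · exact hbc
        · rcases hbc with rfl | ⟨h3, h4⟩
          · exact Or.inr ⟨h1, h2⟩
          · exact Or.inr ⟨h1, h4⟩
    let s : Setoid (Option V) := ⟨fun a b => a = b ∨ (a ∈ C0 ∧ b ∈ C0), requiv⟩
    haveI : DecidableRel s.r := fun a b =>
      inferInstanceAs (Decidable (a = b ∨ (a ∈ C0 ∧ b ∈ C0)))
    refine ⟨Finpartition.ofSetoid s, ?_⟩
    have htog : ∀ a b : Option V, together (Finpartition.ofSetoid s) a b ↔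
        (a = b ∨ (a ∈ C0 ∧ b ∈ C0)) := fun a b =>
      (together_iff_mem_part _ a b).trans Finpartition.mem_part_ofSetoid_iff_rel
    have e1 : ∀ v : V, ctTerm G' (Finpartition.ofSetoid s) none (some v) =
        if v ∈ S then 0 else 1 := by
      intro v
      have hne : ¬(G'.nonedge none (some v) ∧ together (Finpartition.ofSetoid s) none (some v)) := by
        rintro ⟨⟨-, hr, -⟩, -⟩; exact hr (hrealns v)
      have hw : unitW G' none (some v) = 1 := by simp [unitW, hfns v]
      have ht : together (Finpartition.ofSetoid s) none (some v) ↔ v ∈ S := by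
        rw [htog]; simp [hC0]
      by_cases hv : v ∈ S
      · simp only [ctTerm, if_neg hne, add_zero, if_pos hv]
        rw [if_neg]; rintro ⟨-, h⟩; exact h (ht.2 hv)
      · simp only [ctTerm, if_neg hne, add_zero, if_neg hv]
        rw [if_pos ⟨hrealns v, fun h => hv (ht.1 h)⟩, hw]
    have e2 : ∀ u : V, ctTerm G' (Finpartition.ofSetoid s) (some u) none =
        if u ∈ S then 0 else 1 := by
      intro u
      have hne : ¬(G'.nonedge (some u) none ∧ together (Finpartition.ofSetoid s) (some u) none) := by
        rintro ⟨⟨-, hr, -⟩, -⟩; exact hr (hrealsn u)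
      have hw : unitW G' (some u) none = 1 := by simp [unitW, hfsn u]
      have ht : together (Finpartition.ofSetoid s) (some u) none ↔ u ∈ S := by
        rw [htog]; simp [hC0]
      by_cases hu : u ∈ S
      · simp only [ctTerm, if_neg hne, add_zero, if_pos hu]
        rw [if_neg]; rintro ⟨-, h⟩; exact h (ht.2 hu)
      · simp only [ctTerm, if_neg hne, add_zero, if_neg hu]
        rw [if_pos ⟨hrealsn u, fun h => hu (ht.1 h)⟩, hw]
    have e3 : ∀ u v : V, ctTerm G' (Finpartition.ofSetoid s) (some u) (some v) = 0 := by
      intro u v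
      have h1 : ¬(G'.real (some u) (some v) ∧
          ¬together (Finpartition.ofSetoid s) (some u) (some v)) := by
        rintro ⟨hr, -⟩; exact hrealss u v hr
      have h2 : ¬(G'.nonedge (some u) (some v) ∧
          together (Finpartition.ofSetoid s) (some u) (some v)) := by
        rintro ⟨⟨hne, -, hf⟩, htg⟩
        rcases (htog _ _).1 htg with heq | ⟨hmu, hmv⟩
        · exact hne heq
        · have hu : u ∈ S := by simpa [hC0] using hmu
          have hv : v ∈ S := by simpa [hC0] using hmv
          have huv : u ≠ v := fun h => hne (by rw [h])
          exact hf ((hfuzzy u v).2 (hSclique u hu v hv huv))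
      simp only [ctTerm, if_neg h1, if_neg h2, add_zero]
    rw [cost_eq_sum_ctTerm, sum_split_option _ (ctTerm_diag G' (Finpartition.ofSetoid s))]
    have hs1 : ∑ v, ctTerm G' (Finpartition.ofSetoid s) none (some v) =
        Fintype.card V - k := by
      rw [Finset.sum_congr rfl fun v _ => e1 v, sum_if_notmem, hScard]
    have hs2 : ∑ u, (ctTerm G' (Finpartition.ofSetoid s) (some u) none +
        ∑ v, ctTerm G' (Finpartition.ofSetoid s) (some u) (some v)) =
        Fintype.card V - k := by
      have h : ∀ u ∈ (univ : Finset V), ctTerm G' (Finpartition.ofSetoid s) (some u) none +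
          ∑ v, ctTerm G' (Finpartition.ofSetoid s) (some u) (some v)
          = if u ∈ S then 0 else 1 := by
        intro u _
        rw [e2 u, Finset.sum_congr rfl fun v _ => e3 u v, Finset.sum_const_zero, add_zero]
      rw [Finset.sum_congr rfl h, sum_if_notmem, hScard]
    rw [hs1, hs2]
    omega
  · rintro ⟨𝒞, hcost⟩
    set S : Finset V := univ.filter (fun v => together 𝒞 none (some v)) with hSdef
    have hSmem : ∀ v : V, v ∈ S ↔ together 𝒞 none (some v) := by
      intro v; simp [hSdef]
    rw [cost_eq_sum_ctTerm, sum_split_option _ (ctTerm_diag G' 𝒞)] at hcost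
    have b1 : ∀ v : V, (if v ∈ S then (0:ℕ) else 1) ≤ ctTerm G' 𝒞 none (some v) := by
      intro v
      by_cases hv : v ∈ S
      · simp [hv]
      · rw [if_neg hv]
        calc (1:ℕ) = if G'.real none (some v) ∧ ¬together 𝒞 none (some v)
              then unitW G' none (some v) else 0 := by
              rw [if_pos ⟨hrealns v, fun h => hv ((hSmem v).2 h)⟩]
              simp [unitW, hfns v]
        _ ≤ ctTerm G' 𝒞 none (some v) := Nat.le_add_right _ _
    have b2 : ∀ u : V, (if u ∈ S then (0:ℕ) else 1) ≤ ctTerm G' 𝒞 (some u) none := by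
      intro u
      by_cases hu : u ∈ S
      · simp [hu]
      · rw [if_neg hu]
        calc (1:ℕ) = if G'.real (some u) none ∧ ¬together 𝒞 (some u) none
              then unitW G' (some u) none else 0 := by
              rw [if_pos ⟨hrealsn u, fun h => hu ((hSmem u).2 (together_symm' 𝒞 h))⟩]
              simp [unitW, hfsn u]
        _ ≤ ctTerm G' 𝒞 (some u) none := Nat.le_add_right _ _
    have b3 : ∀ u v : V, (if u ∈ S ∧ v ∈ S ∧ u ≠ v ∧ ¬H.Adj u v then (1:ℕ) else 0) ≤
        ctTerm G' 𝒞 (some u) (some v) := by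
      intro u v
      by_cases hc : u ∈ S ∧ v ∈ S ∧ u ≠ v ∧ ¬H.Adj u v
      · obtain ⟨hu, hv, huv, hnadj⟩ := hc
        have htg : together 𝒞 (some u) (some v) :=
          together_trans' 𝒞 ((hSmem u).1 hu) ((hSmem v).1 hv)
        have hnf : ¬ G'.fuzzy (some u) (some v) := fun h => hnadj ((hfuzzy u v).1 h)
        have hnon : G'.nonedge (some u) (some v) :=
          ⟨fun h => huv (Option.some_injective V h), fun h => hrealss u v h, hnf⟩
        calc (if u ∈ S ∧ v ∈ S ∧ u ≠ v ∧ ¬H.Adj u v then (1:ℕ) else 0) = 1 :=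
              if_pos ⟨hu, hv, huv, hnadj⟩
        _ = unitW G' (some u) (some v) := by simp [unitW, hnf]
        _ ≤ ctTerm G' 𝒞 (some u) (some v) := by
              simp only [ctTerm]
              have hB : (if G'.nonedge (some u) (some v) ∧ together 𝒞 (some u) (some v)
                  then unitW G' (some u) (some v) else 0) = unitW G' (some u) (some v) :=
                if_pos ⟨hnon, htg⟩
              rw [hB]
              exact Nat.le_add_left _ _
      · rw [if_neg hc]; exact Nat.zero_le _
    have ha1 : Fintype.card V - S.card ≤ ∑ v, ctTerm G' 𝒞 none (some v) := by
      rw [← sum_if_notmem S]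
      exact Finset.sum_le_sum fun v _ => b1 v
    have ha2 : (Fintype.card V - S.card) +
        (S.offDiag.filter fun p => ¬H.Adj p.1 p.2).card ≤
        ∑ u, (ctTerm G' 𝒞 (some u) none + ∑ v, ctTerm G' 𝒞 (some u) (some v)) := by
      have h : ∑ u, ((if u ∈ S then (0:ℕ) else 1) +
          ∑ v, (if u ∈ S ∧ v ∈ S ∧ u ≠ v ∧ ¬H.Adj u v then (1:ℕ) else 0)) ≤
          ∑ u, (ctTerm G' 𝒞 (some u) none + ∑ v, ctTerm G' 𝒞 (some u) (some v)) :=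
        Finset.sum_le_sum fun u _ =>
          Nat.add_le_add (b2 u) (Finset.sum_le_sum fun v _ => b3 u v)
      calc (Fintype.card V - S.card) + (S.offDiag.filter fun p => ¬H.Adj p.1 p.2).card
          = ∑ u, ((if u ∈ S then (0:ℕ) else 1) +
            ∑ v, (if u ∈ S ∧ v ∈ S ∧ u ≠ v ∧ ¬H.Adj u v then (1:ℕ) else 0)) := by
            rw [Finset.sum_add_distrib, sum_if_notmem, sum_ind]
      _ ≤ _ := h
    obtain ⟨T, hTS, hT, hTcard⟩ := clique_extract H S
    have hSn : S.card ≤ Fintype.card V := Finset.card_le_univ S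
    exact ⟨T, by omega, hT⟩
end
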